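/- Let I be a nil (two-sided) ideal of a ring R. Then R is nil-clean if and only if the quotient ring R/I is nil-clean. -/

import Mathlib

/-- An element of a ring is nil-clean if it is the sum of an idempotent and a nilpotent. -/
def IsNilCleanRing (R : Type*) [Ring R] : Prop :=
  ∀ a : R, ∃ e n : R, IsIdempotentElem e ∧ IsNilpotent n ∧ a = e + n

theorem nilClean_iff_quotient_nil_ideal (R : Type*) [Ring R] (I : TwoSidedIdeal R)
    (hI : ∀ x ∈ I, IsNilpotent x) :
    IsNilCleanRing R ↔ IsNilCleanRing I.ringCon.Quotient := by
  set f : R →+* I.ringCon.Quotient := I.ringCon.mk'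
  have hker : ∀ x ∈ RingHom.ker f, IsNilpotent x := by
    intro x hx
    apply hI
    rw [RingHom.mem_ker] at hx
    rw [TwoSidedIdeal.mem_iff]
    exact RingCon.eq _ |>.mp (by simpa [f] using hx)
  have hsurj : Function.Surjective f := Quotient.exists_rep
  -- nilpotent mod nil ideal is nilpotent
  have hnil : ∀ x : R, IsNilpotent (f x) → IsNilpotent x := by
    intro x ⟨k, hk⟩
    have : IsNilpotent (x ^ k) := hker _ (by rw [RingHom.mem_ker, map_pow]; exact hk)
    obtain ⟨m, hm⟩ := this
    exact ⟨k * m, by rw [pow_mul]; exact hm⟩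
  constructor
  · intro h a
    obtain ⟨b, rfl⟩ := hsurj a
    obtain ⟨e, n, he, hn, rfl⟩ := h b
    exact ⟨f e, f n, he.map f, hn.map f, by rw [map_add]⟩
  · intro h a
    obtain ⟨e', n', he', hn', hdec⟩ := h (f a)
    obtain ⟨e, he, hfe⟩ := exists_isIdempotentElem_eq_of_ker_isNilpotent f hker e'
      (hsurj e') he'
    refine ⟨e, a - e, he, ?_, by abel⟩
    apply hnil
    have : f (a - e) = n' := by rw [map_sub, hfe, hdec]; abel
    rw [this]; exact hn'
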